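/- arXiv:1108.3659 — 3 statements merged into one kernel-verified Lean document; each statement's English description precedes it below -/
import Mathlib

section
/- For every integer n ≥ 1 and all i, j ∈ {1, …, n}, the number of Dyck paths of semilength n whose first peak has height i and whose last peak has height j equals the (i,j)-entry c^{(n)}_{i,j} of the matrix C_n; that is, |D_n(i,j)| = c^{(n)}_{i,j}. -/
/-- A Dyck word: a list of booleans (`true` = rise, `false` = fall) with equally many
rises and falls such that every prefix has at least as many rises as falls. -/
def IsDyckWord (w : List Bool) : Prop :=
  w.count true = w.count false ∧ ∀ p, p <+: w → p.count false ≤ p.count true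

/-- The list of heights of the peaks (occurrences of the factor `rf`) of a word,
from left to right. The height of a peak is the number of rises minus the number
of falls in the prefix ending with the rise of that peak. -/
def peakHeights (w : List Bool) : List ℕ :=
  (List.range w.length).filterMap (fun k =>
    if w[k]? = some true ∧ w[k + 1]? = some false then
      some ((w.take (k + 1)).count true - (w.take (k + 1)).count false)
    else none)

/-- `DyckD n i j` is the set of Dyck paths of semilength `n` whose first peak has
height `i` and whose last peak has height `j`. -/
def DyckD (n i j : ℕ) : Set (List Bool) :=
  {w | IsDyckWord w ∧ w.count true = n ∧
    (peakHeights w).head? = some i ∧ (peakHeights w).getLast? = some j}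
/-- The entries `c^{(n)}_{i,j}` of the matrices `C_n`, defined by `C_1 = (1)` and
`C_{n+1} = (τ C_n) ⊕ (1)`, where `(τ A)_{i,j} = Σ_{s=i-1}^{n} a_{s,j}` (with the
convention `a_{0,j} = 0`). Entries with an index outside `{1, …, n}` are `0`. -/
def cMat : ℕ → ℕ → ℕ → ℕ
  | 0, _, _ => 0
  | 1, i, j => if i = 1 ∧ j = 1 then 1 else 0
  | n + 2, i, j =>
      if 1 ≤ i ∧ i ≤ n + 1 ∧ 1 ≤ j ∧ j ≤ n + 1 then
        ∑ s ∈ Finset.Icc (i - 1) (n + 1), cMat (n + 1) s j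
      else if i = n + 2 ∧ j = n + 2 then 1 else 0

/-- Peak heights scanning helper: `t`,`f` are counts of rises/falls so far. -/
def auxPH : ℕ → ℕ → List Bool → List ℕ
  | _, _, [] => []
  | t, f, true :: w => (if w.head? = some false then [(t + 1) - f] else []) ++ auxPH (t+1) f w
  | t, f, false :: w => auxPH t (f+1) w

/-- Nonnegativity-from-`(t,f)` condition. -/
def Cfrom (t f : ℕ) (w : List Bool) : Prop :=
  ∀ p, p <+: w → f + p.count false ≤ t + p.count true

lemma Cfrom.le {t f w} (h : Cfrom t f w) : f ≤ t := by
  simpa using h [] List.nil_prefix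

lemma cfrom_nil {t f : ℕ} : Cfrom t f [] ↔ f ≤ t := by
  constructor
  · exact Cfrom.le
  · intro h p hp
    rw [List.prefix_nil] at hp; subst hp; simpa

lemma cfrom_cons_true {t f : ℕ} {w : List Bool} :
    Cfrom t f (true :: w) ↔ f ≤ t ∧ Cfrom (t+1) f w := by
  constructor
  · intro h
    refine ⟨h.le, fun p hp => ?_⟩
    have := h (true :: p) (by simpa using hp)
    simp [List.count_cons] at this ⊢
    omega
  · rintro ⟨h1, h2⟩ p hp
    rcases p with _ | ⟨b, p⟩
    · simpa
    · rw [List.cons_prefix_cons] at hp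
      obtain ⟨rfl, hp⟩ := hp
      have := h2 p hp
      simp [List.count_cons]
      omega
lemma cfrom_cons_false {t f : ℕ} {w : List Bool} :
    Cfrom t f (false :: w) ↔ Cfrom t (f+1) w := by
  constructor
  · intro h p hp
    have := h (false :: p) (by simpa using hp)
    simp [List.count_cons] at this ⊢
    omega
  · intro h p hp
    rcases p with _ | ⟨b, p⟩
    · have := h.le; simp; omega
    · rw [List.cons_prefix_cons] at hp
      obtain ⟨rfl, hp⟩ := hp
      have := h p hp
      simp [List.count_cons] at this ⊢
      omega

lemma cfrom_rep_true {t f : ℕ} {w : List Bool} : ∀ {s : ℕ},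
    Cfrom t f (List.replicate s true ++ w) ↔ f ≤ t ∧ Cfrom (t+s) f w := by
  intro s
  induction s generalizing t with
  | zero => simp only [List.replicate_zero, List.nil_append, Nat.add_zero]
            exact ⟨fun h => ⟨h.le, h⟩, fun h => h.2⟩
  | succ m ih =>
      rw [List.replicate_succ, List.cons_append, cfrom_cons_true, ih]
      have e : t + 1 + m = t + (m+1) := by omega
      rw [e]
      constructor
      · rintro ⟨h1, h2, h3⟩; exact ⟨h1, h3⟩
      · rintro ⟨h1, h3⟩; exact ⟨h1, by omega, h3⟩

lemma cfrom_shift {t f : ℕ} {w : List Bool} : Cfrom (t+1) (f+1) w ↔ Cfrom t f w := by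
  constructor <;> intro h p hp <;> have := h p hp <;> omega

lemma isDyck_iff {w : List Bool} :
    IsDyckWord w ↔ w.count true = w.count false ∧ Cfrom 0 0 w := by
  unfold IsDyckWord Cfrom
  simp

lemma auxPH_shift {w : List Bool} : ∀ {t f : ℕ}, auxPH (t+1) (f+1) w = auxPH t f w := by
  induction w with
  | nil => intros; rfl
  | cons b w ih =>
      intro t f
      cases b <;> simp only [auxPH]
      · exact ih
      · rw [ih, Nat.succ_sub_succ]

lemma auxPH_rep {w : List Bool} : ∀ {s t f : ℕ}, 1 ≤ s →
    auxPH t f (List.replicate s true ++ false :: w) = ((t+s) - f) :: auxPH (t+s) (f+1) w := by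
  intro s
  induction s with
  | zero => omega
  | succ m ih =>
      intro t f _
      rcases Nat.eq_zero_or_pos m with rfl | hm
      · simp [auxPH]
      · rw [List.replicate_succ, List.cons_append]
        have hh : (List.replicate m true ++ false :: w).head? = some true := by
          rcases m with _ | m; · omega
          · simp [List.replicate_succ]
        simp only [auxPH, hh, ih hm]
        rw [if_neg (by simp), List.nil_append]
        have e : t + 1 + m = t + (m+1) := by omega
        rw [e]

lemma auxPH_rep_false : ∀ {c t f : ℕ}, auxPH t f (List.replicate c false) = [] := by
  intro c
  induction c with
  | zero => intros; rfl
  | succ m ih => intro t f; rw [List.replicate_succ]; simp only [auxPH]; exact ih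

lemma auxPH_eq_nil {w : List Bool} : ∀ {t f : ℕ}, auxPH t f w = [] →
    ∃ c d, w = List.replicate c false ++ List.replicate d true := by
  induction w with
  | nil => exact fun _ => ⟨0, 0, rfl⟩
  | cons b w ih =>
      intro t f h
      cases b <;> simp only [auxPH] at h
      · obtain ⟨c, d, rfl⟩ := ih h
        exact ⟨c+1, d, by rw [List.replicate_succ]; rfl⟩
      · rw [List.append_eq_nil_iff] at h
        obtain ⟨c, d, rfl⟩ := ih h.2
        rcases c with _ | c
        · exact ⟨0, d+1, by simp [List.replicate_succ]⟩
        · exfalso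
          have := h.1
          simp [List.replicate_succ] at this

lemma auxPH_def1 : ∀ t f, auxPH t f [] = [] := fun _ _ => rfl
lemma auxPH_def2 : ∀ t f w, auxPH t f (true :: w) = (if w.head? = some false then [(t + 1) - f] else []) ++ auxPH (t+1) f w := fun _ _ _ => rfl
lemma auxPH_def3 : ∀ t f w, auxPH t f (false :: w) = auxPH t (f+1) w := fun _ _ _ => rfl

lemma peakHeights_eq_aux (w : List Bool) : ∀ (t f : ℕ),
    (List.range w.length).filterMap (fun k =>
      if w[k]? = some true ∧ w[k + 1]? = some false then
        some ((t + (w.take (k + 1)).count true) - (f + (w.take (k + 1)).count false))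
      else none) = auxPH t f w := by
  induction w with
  | nil => intro t f; simp [auxPH_def1]
  | cons b v ih =>
      intro t f
      rw [List.length_cons, List.range_succ_eq_map, List.filterMap_cons, List.filterMap_map]
      have htail : ∀ (t' f' : ℕ), (if b = true then t + 1 = t' ∧ f = f' else t = t' ∧ f + 1 = f') →
          List.filterMap ((fun k =>
            if (b :: v)[k]? = some true ∧ (b :: v)[k + 1]? = some false then
              some ((t + ((b :: v).take (k + 1)).count true) - (f + ((b :: v).take (k + 1)).count false))
            else none) ∘ Nat.succ) (List.range v.length) = auxPH t' f' v := by
        intro t' f' ht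
        rw [← ih t' f']
        apply List.filterMap_congr
        intro k _
        simp only [Function.comp_apply, List.getElem?_cons_succ, List.take_succ_cons,
          List.count_cons]
        by_cases h : v[k]? = some true ∧ v[k + 1]? = some false
        · rw [if_pos h, if_pos h]
          congr 1
          cases b <;> simp at ht <;> simp <;> omega
        · rw [if_neg h, if_neg h]
      cases b
      · have h0 : ¬((false :: v)[0]? = some true ∧ (false :: v)[0 + 1]? = some false) := by simp
        rw [if_neg h0, auxPH_def3]
        exact htail t (f+1) (by simp)
      · have h1 : (true :: v)[0]? = some true := by simp
        rw [auxPH_def2]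
        by_cases h : v.head? = some false
        · have h0 : ((true :: v)[0]? = some true ∧ (true :: v)[0 + 1]? = some false) := by
            simpa [List.head?_eq_getElem?] using h
          rw [if_pos h0, if_pos h]
          have : ((true :: v).take (0 + 1)) = [true] := by simp
          rw [this]
          simp only [List.count_cons, List.count_nil]
          rw [htail (t+1) f (by simp)]
          simp
        · have h0 : ¬((true :: v)[0]? = some true ∧ (true :: v)[0 + 1]? = some false) := by
            simpa [List.head?_eq_getElem?] using h
          rw [if_neg h0, if_neg h, List.nil_append]
          exact htail (t+1) f (by simp)

lemma peakHeights_eq (w : List Bool) : peakHeights w = auxPH 0 0 w := by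
  rw [← peakHeights_eq_aux w 0 0]
  unfold peakHeights
  apply List.filterMap_congr
  intro k _
  simp

lemma auxPH_bound {w : List Bool} : ∀ {t f : ℕ}, Cfrom t f w →
    ∀ x ∈ auxPH t f w, x + f ≤ t + w.count true := by
  induction w with
  | nil => intro t f _ x hx; simp [auxPH_def1] at hx
  | cons b v ih =>
      intro t f hC x hx
      cases b
      · rw [auxPH_def3] at hx
        rw [cfrom_cons_false] at hC
        have := ih hC x hx
        simp [List.count_cons]
        omega
      · rw [auxPH_def2] at hx
        rw [cfrom_cons_true] at hC
        simp [List.count_cons]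
        rcases List.mem_append.1 hx with h | h
        · have : x = (t+1) - f := by
            by_cases hh : v.head? = some false <;> simp [hh] at h
            exact h
          omega
        · have := ih hC.2 x h
          omega

lemma exists_decomp0 : ∀ (w : List Bool), 1 ≤ w.count false →
    ∃ a w', w = List.replicate a true ++ false :: w' := by
  intro w
  induction w with
  | nil => simp
  | cons b v ih =>
      intro h
      cases b
      · exact ⟨0, v, rfl⟩
      · simp [List.count_cons] at h
        obtain ⟨a, w', rfl⟩ := ih (List.count_pos_iff.2 h)
        exact ⟨a + 1, w', by rw [List.replicate_succ]; rfl⟩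

lemma decomp_unique : ∀ {a b : ℕ} {u v : List Bool},
    List.replicate a true ++ false :: u = List.replicate b true ++ false :: v →
    a = b ∧ u = v := by
  intro a
  induction a with
  | zero =>
      intro b u v h
      rcases b with _ | b
      · simpa using h
      · rw [List.replicate_succ] at h
        simp at h
  | succ m ih =>
      intro b u v h
      rcases b with _ | b
      · rw [List.replicate_succ] at h
        simp at h
      · rw [List.replicate_succ, List.replicate_succ, List.cons_append, List.cons_append,
          List.cons_eq_cons] at h
        obtain ⟨h1, h2⟩ := ih h.2
        exact ⟨by omega, h2⟩

lemma mem_DyckD {n i j : ℕ} (hn : 1 ≤ n) (hi : 1 ≤ i) (w : List Bool) :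
    w ∈ DyckD n i j ↔ ∃ w', w = List.replicate i true ++ false :: w' ∧
      i + w'.count true = n ∧ 1 + w'.count false = n ∧ Cfrom i 1 w' ∧
      (i :: auxPH i 1 w').getLast? = some j := by
  constructor
  · rintro ⟨hD, hct, hhead, hlast⟩
    obtain ⟨hbal, hC⟩ := isDyck_iff.1 hD
    have hcf : 1 ≤ w.count false := by omega
    obtain ⟨s, w', rfl⟩ := exists_decomp0 w hcf
    have hs : 1 ≤ s := by
      rcases Nat.eq_zero_or_pos s with rfl | h
      · exfalso
        simp only [List.replicate_zero, List.nil_append, cfrom_cons_false] at hC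
        exact absurd hC.le (by omega)
      · exact h
    have hpeaks : peakHeights (List.replicate s true ++ false :: w') =
        s :: auxPH s 1 w' := by
      rw [peakHeights_eq, auxPH_rep hs]
      simp
    rw [hpeaks] at hhead hlast
    simp at hhead
    subst hhead
    refine ⟨w', rfl, ?_, ?_, ?_, ?_⟩
    · simp [List.count_append, List.count_cons, List.count_replicate] at hct
      omega
    · simp [List.count_append, List.count_cons, List.count_replicate] at hct hbal
      omega
    · rw [cfrom_rep_true, cfrom_cons_false] at hC
      simpa using hC.2
    · exact hlast
  · rintro ⟨w', rfl, hct, hcf, hC, hlast⟩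
    have hpeaks : peakHeights (List.replicate i true ++ false :: w') =
        i :: auxPH i 1 w' := by
      rw [peakHeights_eq, auxPH_rep hi]
      simp
    refine ⟨?_, ?_, ?_, ?_⟩
    · rw [isDyck_iff]
      constructor
      · simp [List.count_append, List.count_cons, List.count_replicate]
        omega
      · rw [cfrom_rep_true, cfrom_cons_false]
        refine ⟨by omega, ?_⟩
        simpa using hC
    · simp [List.count_append, List.count_cons, List.count_replicate]
      omega
    · rw [hpeaks]; rfl
    · rw [hpeaks]; exact hlast

lemma length_eq_counts (w : List Bool) : w.length = w.count true + w.count false := by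
  induction w with
  | nil => simp
  | cons b v ih =>
      rw [List.length_cons, ih]
      cases b <;> simp [List.count_cons] <;> omega

lemma dyck_finite (n i j : ℕ) : (DyckD n i j).Finite := by
  apply Set.Finite.subset (List.finite_length_eq Bool (2*n))
  rintro w ⟨hD, hct, -, -⟩
  have h1 := length_eq_counts w
  have h2 := hD.1
  simp only [Set.mem_setOf_eq]
  omega

lemma cfrom_rep_false {t : ℕ} : ∀ {c f : ℕ}, Cfrom t f (List.replicate c false) ↔ f + c ≤ t := by
  intro c
  induction c with
  | zero => intro f; rw [List.replicate_zero, cfrom_nil]; omega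
  | succ m ih =>
      intro f
      rw [List.replicate_succ, cfrom_cons_false, ih]
      omega

lemma auxPH_ne_nil {s n : ℕ} {w' : List Bool} (hC : Cfrom s 1 w')
    (hct : s + w'.count true = n) (hcf : 1 + w'.count false = n) (hs : s < n) :
    auxPH s 1 w' ≠ [] := by
  intro h
  obtain ⟨c, d, rfl⟩ := auxPH_eq_nil h
  have hc : 1 + c ≤ s := by
    have := hC (List.replicate c false) (List.prefix_append _ _)
    simpa [List.count_replicate] using this
  simp [List.count_append, List.count_replicate] at hct hcf
  omega

/-- Insertion of a new first peak of height `i` into a path whose first peak has height `s`. -/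
def ins (i s : ℕ) (w : List Bool) : List Bool :=
  List.replicate i true ++ false :: (List.replicate (s+1-i) true ++ w.drop s)

lemma drop_rep {s : ℕ} {x : List Bool} : (List.replicate s true ++ x).drop s = x := by
  have := List.drop_left (l₁ := List.replicate s true) (l₂ := x)
  rwa [List.length_replicate] at this

lemma ins_mem {n i j s : ℕ} (hn : 1 ≤ n) (hi : 1 ≤ i) (hin : i ≤ n) (hjn : j ≤ n)
    (hs1 : i - 1 ≤ s) (hs2 : 1 ≤ s) (hsn : s ≤ n) {p : List Bool} (hp : p ∈ DyckD n s j) :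
    ins i s p ∈ DyckD (n+1) i j := by
  obtain ⟨w', rfl, hct, hcf, hC, hlast⟩ := (mem_DyckD hn hs2 p).1 hp
  have hia : i + (s + 1 - i) = s + 1 := by omega
  have hins : ins i s (List.replicate s true ++ false :: w') =
      List.replicate i true ++ false :: (List.replicate (s+1-i) true ++ false :: w') := by
    unfold ins
    rw [drop_rep]
  rw [hins]
  rw [mem_DyckD (by omega) hi]
  refine ⟨List.replicate (s+1-i) true ++ false :: w', rfl, ?_, ?_, ?_, ?_⟩
  · simp [List.count_append, List.count_cons, List.count_replicate]
    omega
  · simp [List.count_append, List.count_cons, List.count_replicate]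
    omega
  · rw [cfrom_rep_true, hia, cfrom_cons_false]
    exact ⟨hi, by simpa [Nat.add_comm] using cfrom_shift.2 hC⟩
  · rcases Nat.eq_zero_or_pos (s + 1 - i) with h0 | hpos
    · -- i = s + 1
      rw [h0, List.replicate_zero, List.nil_append, auxPH_def3]
      have he : auxPH i 2 w' = auxPH s 1 w' := by
        have : i = s + 1 := by omega
        rw [this]
        exact auxPH_shift
      rw [he]
      have hne : auxPH s 1 w' ≠ [] := auxPH_ne_nil hC hct hcf (by omega)
      obtain ⟨y, l', hl⟩ := List.exists_cons_of_ne_nil hne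
      rw [hl, List.getLast?_cons_cons]
      rw [hl, List.getLast?_cons_cons] at hlast
      exact hlast
    · rw [auxPH_rep hpos, hia]
      have he : auxPH (s+1) (1+1) w' = auxPH s 1 w' := auxPH_shift
      rw [he, List.getLast?_cons_cons]
      simpa using hlast

lemma ins_surj {n i j : ℕ} (hn : 1 ≤ n) (hi : 1 ≤ i) (hin : i ≤ n) (hjn : j ≤ n)
    {q : List Bool} (hq : q ∈ DyckD (n+1) i j) :
    ∃ s, (i - 1 ≤ s ∧ 1 ≤ s ∧ s ≤ n) ∧ ∃ p ∈ DyckD n s j, q = ins i s p := by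
  obtain ⟨w'', rfl, hct, hcf, hC, hlast⟩ := (mem_DyckD (by omega) hi q).1 hq
  obtain ⟨a, w', rfl⟩ := exists_decomp0 w'' (by omega)
  rw [cfrom_rep_true, cfrom_cons_false] at hC
  have h2 : 2 ≤ i + a := hC.2.le
  set s := i + a - 1 with hsdef
  have hia : i + a = s + 1 := by omega
  have hCs : Cfrom s 1 w' := by
    have := hC.2
    rw [hia] at this
    exact cfrom_shift.1 this
  simp [List.count_append, List.count_cons, List.count_replicate] at hct hcf
  have hs2 : 1 ≤ s := by omega
  have hsn : s ≤ n := by omega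
  have hctp : s + w'.count true = n := by omega
  have hcfp : 1 + w'.count false = n := by omega
  have hlast' : (s :: auxPH s 1 w').getLast? = some j := by
    rcases Nat.eq_zero_or_pos a with rfl | hpos
    · -- i = s + 1
      rw [List.replicate_zero, List.nil_append, auxPH_def3] at hlast
      have he : auxPH i 2 w' = auxPH s 1 w' := by
        have : i = s + 1 := by omega
        rw [this]; exact auxPH_shift
      rw [he] at hlast
      have hne : auxPH s 1 w' ≠ [] := auxPH_ne_nil hCs hctp hcfp (by omega)
      obtain ⟨y, l', hl⟩ := List.exists_cons_of_ne_nil hne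
      rw [hl, List.getLast?_cons_cons] at hlast ⊢
      exact hlast
    · rw [auxPH_rep hpos, hia] at hlast
      have he : auxPH (s+1) (1+1) w' = auxPH s 1 w' := auxPH_shift
      rw [he, List.getLast?_cons_cons] at hlast
      simpa using hlast
  refine ⟨s, ⟨by omega, hs2, hsn⟩, List.replicate s true ++ false :: w', ?_, ?_⟩
  · rw [mem_DyckD hn hs2]
    exact ⟨w', rfl, hctp, hcfp, hCs, hlast'⟩
  · unfold ins
    rw [drop_rep]
    have ha : s + 1 - i = a := by omega
    rw [ha]

lemma ins_inj {n i j s1 s2 : ℕ} (hn : 1 ≤ n) (hi : 1 ≤ i)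
    (h11 : i - 1 ≤ s1) (h12 : 1 ≤ s1) (h21 : i - 1 ≤ s2) (h22 : 1 ≤ s2)
    {p1 p2 : List Bool} (hp1 : p1 ∈ DyckD n s1 j) (hp2 : p2 ∈ DyckD n s2 j)
    (h : ins i s1 p1 = ins i s2 p2) : s1 = s2 ∧ p1 = p2 := by
  obtain ⟨w1, rfl, -, -, -, -⟩ := (mem_DyckD hn h12 p1).1 hp1
  obtain ⟨w2, rfl, -, -, -, -⟩ := (mem_DyckD hn h22 p2).1 hp2
  unfold ins at h
  rw [drop_rep, drop_rep] at h
  have h1 := decomp_unique h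
  obtain ⟨ha, hw⟩ := decomp_unique h1.2
  have hs : s1 = s2 := by omega
  subst hs
  exact ⟨rfl, by rw [hw]⟩

lemma my_ncard_biUnion {S : Finset ℕ} {T : ℕ → Set (List Bool)}
    (hfin : ∀ s ∈ S, (T s).Finite)
    (hdisj : ∀ s1 ∈ S, ∀ s2 ∈ S, s1 ≠ s2 → Disjoint (T s1) (T s2)) :
    (⋃ s ∈ S, T s).ncard = ∑ s ∈ S, (T s).ncard := by
  classical
  induction S using Finset.induction with
  | empty => simp
  | @insert a S ha ih =>
      rw [Finset.set_biUnion_insert, Finset.sum_insert ha,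
        Set.ncard_union_eq ?_ (hfin a (by simp)) ?_, ih]
      · intro s hs; exact hfin s (by simp [hs])
      · intro s1 hs1 s2 hs2 h
        exact hdisj s1 (by simp [hs1]) s2 (by simp [hs2]) h
      · simp only [Set.disjoint_iUnion_right]
        intro s hs
        exact hdisj a (by simp) s (by simp [hs]) (by rintro rfl; exact ha hs)
      · exact Set.Finite.biUnion S.finite_toSet (fun s hs => hfin s (by simp; right; simpa using hs))

lemma count_true_zero_shape {w : List Bool} (h : w.count true = 0) :
    w = List.replicate (w.count false) false := by
  have hall : ∀ b ∈ w, b = false := by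
    intro b hb
    cases b
    · rfl
    · exact absurd (List.count_pos_iff.2 hb) (by omega)
  have hl := List.eq_replicate_length.2 hall
  have : w.length = w.count false := by
    have := length_eq_counts w
    omega
  rwa [this] at hl

lemma dyck_top_eq (n : ℕ) : DyckD (n+1) (n+1) (n+1) =
    {List.replicate (n+1) true ++ false :: List.replicate n false} := by
  ext w
  rw [Set.mem_singleton_iff, mem_DyckD (by omega) (by omega)]
  constructor
  · rintro ⟨w', rfl, hct, hcf, -, -⟩
    have h0 : w'.count true = 0 := by omega
    have := count_true_zero_shape h0
    rw [show w'.count false = n from by omega] at this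
    rw [this]
  · rintro rfl
    refine ⟨List.replicate n false, rfl, ?_, ?_, ?_, ?_⟩
    · simp [List.count_replicate]
    · simp [List.count_replicate]; omega
    · rw [cfrom_rep_false]; omega
    · rw [auxPH_rep_false]; rfl

lemma dyck_top_empty (n j : ℕ) (hj : j ≠ n+1) : DyckD (n+1) (n+1) j = ∅ := by
  ext w
  simp only [Set.mem_empty_iff_false, iff_false]
  rw [mem_DyckD (by omega) (by omega)]
  rintro ⟨w', rfl, hct, hcf, -, hlast⟩
  have h0 : w'.count true = 0 := by omega
  have hw' := count_true_zero_shape h0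
  rw [hw', auxPH_rep_false] at hlast
  simp at hlast
  exact hj hlast.symm

lemma dyck_last_top (n i : ℕ) (hi1 : 1 ≤ i) (hin : i ≤ n) : DyckD (n+1) i (n+1) = ∅ := by
  ext w
  simp only [Set.mem_empty_iff_false, iff_false]
  rw [mem_DyckD (by omega) hi1]
  rintro ⟨w', rfl, hct, hcf, hC, hlast⟩
  rcases List.eq_nil_or_concat (auxPH i 1 w') with hnil | _
  · rw [hnil] at hlast
    simp at hlast
    omega
  · have hne : auxPH i 1 w' ≠ [] := by
      rintro hnil
      rw [hnil] at hlast; simp at hlast; omega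
    obtain ⟨y, l', hl⟩ := List.exists_cons_of_ne_nil hne
    rw [hl, List.getLast?_cons_cons] at hlast
    have hmem : (n+1) ∈ auxPH i 1 w' := by
      rw [hl]
      exact List.mem_of_mem_getLast? (by rw [hlast]; rfl)
    have := auxPH_bound hC _ hmem
    omega

lemma cMat_zero_left (n j : ℕ) : cMat n 0 j = 0 := by
  match n with
  | 0 => rfl
  | 1 => simp [cMat]
  | (m+2) => simp [cMat]

lemma cMat_succ_eq (k i j : ℕ) (hi1 : 1 ≤ i) (hin : i ≤ k+1) (hj1 : 1 ≤ j) (hjn : j ≤ k+1) :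
    cMat (k+1+1) i j = ∑ s ∈ Finset.Icc (i-1) (k+1), cMat (k+1) s j := by
  show cMat (k+2) i j = _
  simp only [cMat]
  rw [if_pos ⟨hi1, hin, hj1, hjn⟩]

lemma cMat_top_top (k : ℕ) : cMat (k+1+1) (k+1+1) (k+1+1) = 1 := by
  show cMat (k+2) (k+2) (k+2) = 1
  simp [cMat]

lemma cMat_off (k i j : ℕ) (h : ¬(1 ≤ i ∧ i ≤ k+1 ∧ 1 ≤ j ∧ j ≤ k+1)) (h2 : ¬(i = k+2 ∧ j = k+2)) :
    cMat (k+1+1) i j = 0 := by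
  show cMat (k+2) i j = 0
  simp only [cMat]
  rw [if_neg h, if_neg h2]

lemma main_aux : ∀ n, 1 ≤ n → ∀ i j, 1 ≤ i → i ≤ n → 1 ≤ j → j ≤ n →
    (DyckD n i j).ncard = cMat n i j := by
  intro n
  induction n with
  | zero => omega
  | succ m ih =>
    intro _ i j hi1 hin hj1 hjn
    rcases Nat.eq_zero_or_pos m with rfl | hm
    · have hieq : i = 1 := by omega
      have hjeq : j = 1 := by omega
      subst hieq; subst hjeq
      rw [show (1:ℕ) = 0 + 1 from rfl, dyck_top_eq 0, Set.ncard_singleton]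
      simp [cMat]
    · rcases Nat.lt_or_ge i (m+1) with hilt | hige
      · rcases Nat.lt_or_ge j (m+1) with hjlt | hjge
        · -- main case: i ≤ m, j ≤ m
          have him : i ≤ m := by omega
          have hjm : j ≤ m := by omega
          have hset : DyckD (m+1) i j =
              ⋃ s ∈ Finset.Icc (max 1 (i-1)) m, ins i s '' DyckD m s j := by
            ext q
            simp only [Set.mem_iUnion, Set.mem_image, Finset.mem_Icc, max_le_iff]
            constructor
            · intro hq
              obtain ⟨s, ⟨hs1, hs2, hs3⟩, p, hp, rfl⟩ := ins_surj hm hi1 him hjm hq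
              exact ⟨s, ⟨⟨hs2, hs1⟩, hs3⟩, p, hp, rfl⟩
            · rintro ⟨s, ⟨⟨hs2, hs1⟩, hs3⟩, p, hp, rfl⟩
              exact ins_mem hm hi1 him hjm hs1 hs2 hs3 hp
          rw [hset, my_ncard_biUnion]
          · have him2 : ∀ s ∈ Finset.Icc (max 1 (i-1)) m,
                (ins i s '' DyckD m s j).ncard = cMat m s j := by
              intro s hs
              simp only [Finset.mem_Icc, max_le_iff] at hs
              rw [Set.ncard_image_of_injOn
                  (fun p1 hp1 p2 hp2 he =>
                    (ins_inj hm hi1 hs.1.2 hs.1.1 hs.1.2 hs.1.1 hp1 hp2 he).2),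
                ih hm s j hs.1.1 hs.2 hj1 hjm]
            rw [Finset.sum_congr rfl him2]
            obtain ⟨k, rfl⟩ : ∃ k, m = k + 1 := ⟨m - 1, by omega⟩
            rw [cMat_succ_eq k i j hi1 (by omega) hj1 (by omega)]
            rcases Nat.eq_or_lt_of_le hi1 with h1 | h2
            · -- i = 1
              rw [show max 1 (i-1) = 1 from by omega]
              rw [show i - 1 = 0 from by omega]
              rw [show Finset.Icc 0 (k+1) = insert 0 (Finset.Icc 1 (k+1)) from by
                ext x; simp [Finset.mem_Icc]; omega]
              rw [Finset.sum_insert (by simp), cMat_zero_left]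
              omega
            · rw [show max 1 (i-1) = i - 1 from by omega]
          · intro s _
            exact (dyck_finite m s j).image _
          · intro s1 hs1 s2 hs2 hne
            simp only [Finset.mem_Icc, max_le_iff] at hs1 hs2
            rw [Set.disjoint_left]
            rintro q ⟨p1, hp1, rfl⟩ ⟨p2, hp2, he⟩
            exact hne (ins_inj hm hi1 hs1.1.2 hs1.1.1 hs2.1.2 hs2.1.1 hp1 hp2 he.symm).1
        · -- j = m+1, i ≤ m
          have hjeq : j = m + 1 := by omega
          subst hjeq
          rw [dyck_last_top m i hi1 (by omega), Set.ncard_empty]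
          obtain ⟨k, rfl⟩ : ∃ k, m = k + 1 := ⟨m - 1, by omega⟩
          rw [cMat_off k i (k+2) (by omega) (by omega)]
      · -- i = m+1
        have hieq : i = m + 1 := by omega
        subst hieq
        obtain ⟨k, rfl⟩ : ∃ k, m = k + 1 := ⟨m - 1, by omega⟩
        rcases Nat.eq_or_lt_of_le hjn with hjeq | hjlt
        · rw [hjeq, dyck_top_eq (k+1), Set.ncard_singleton, cMat_top_top]
        · rw [dyck_top_empty (k+1) j (by omega), Set.ncard_empty,
            cMat_off k (k+2) j (by omega) (by omega)]

/-- For `n ≥ 1` and `i, j ∈ {1, …, n}`, the number of Dyck paths of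
semilength `n` whose first peak has height `i` and whose last peak has height `j`
equals the `(i,j)`-entry of the matrix `C_n`. -/
theorem dyck_count_eq_cMat (n : ℕ) (hn : 1 ≤ n) (i j : ℕ)
    (hi : i ∈ Finset.Icc 1 n) (hj : j ∈ Finset.Icc 1 n) :
    (DyckD n i j).ncard = cMat n i j := by
  simp only [Finset.mem_Icc] at hi hj
  exact main_aux n hn i j hi.1 hi.2 hj.1 hj.2
end

section
/- For every integer n ≥ 1, the sum of all entries of the matrix C_n equals the n-th Catalan number: Σ_{i=1}^{n} Σ_{j=1}^{n} c^{(n)}_{i,j} = (1/(n+1))·binom(2n, n). -/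
open Finset

/-- Ballot numbers (entries of the Catalan triangle). -/
def ballot' (n k : ℕ) : ℕ := (n+k).choose n - (n+k).choose (n+1)

lemma ballot'_choose_le (n k : ℕ) (h : k ≤ n+1) : (n+k).choose (n+1) ≤ (n+k).choose n := by
  have h1 : (n+k).choose (n+1) * (n+1) = (n+k).choose n * k := by
    have := Nat.choose_succ_right_eq (n+k) n
    simpa using this
  have h2 : (n+k).choose (n+1) * (n+1) ≤ (n+k).choose n * (n+1) := by
    rw [h1]; exact Nat.mul_le_mul_left _ h
  exact Nat.le_of_mul_le_mul_right h2 (Nat.succ_pos n)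

lemma ballot'_cast (n k : ℕ) (h : k ≤ n+1) :
    (ballot' n k : ℤ) = ((n+k).choose n : ℤ) - ((n+k).choose (n+1) : ℤ) := by
  unfold ballot'
  exact_mod_cast Int.ofNat_sub (ballot'_choose_le n k h)

lemma ballot'_zero (n : ℕ) : ballot' n 0 = 1 := by
  simp [ballot', Nat.choose_self, Nat.choose_succ_self]

lemma ballot'_top (n : ℕ) : ballot' n (n+1) = 0 := by
  unfold ballot'
  have : (n + (n+1)).choose n = (n + (n+1)).choose (n+1) := by
    have := Nat.choose_symm (n := n + (n+1)) (k := n+1) (by omega)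
    simpa [show n + (n+1) - (n+1) = n by omega] using this
  omega

lemma ballot'_pascal (n m : ℕ) (hm : m ≤ n) :
    ballot' (n+1) (m+1) = ballot' (n+1) m + ballot' n (m+1) := by
  have h1 := ballot'_cast (n+1) (m+1) (by omega)
  have h2 := ballot'_cast (n+1) m (by omega)
  have h3 := ballot'_cast n (m+1) (by omega)
  have p1 : (n+m+2).choose (n+1) = (n+m+1).choose n + (n+m+1).choose (n+1) := by
    have := Nat.choose_succ_succ (n+m+1) n
    simpa [show n+m+1+1 = n+m+2 by omega] using this
  have p2 : (n+m+2).choose (n+2) = (n+m+1).choose (n+1) + (n+m+1).choose (n+2) := by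
    have := Nat.choose_succ_succ (n+m+1) (n+1)
    simpa [show n+m+1+1 = n+m+2 by omega] using this
  have e1 : n+1+(m+1) = n+m+2 := by omega
  have e2 : n+1+m = n+m+1 := by omega
  have e3 : n+(m+1) = n+m+1 := by omega
  rw [e1] at h1; rw [e2] at h2; rw [e3] at h3
  have : (ballot' (n+1) (m+1) : ℤ) = (ballot' (n+1) m : ℤ) + (ballot' n (m+1) : ℤ) := by
    rw [h1, h2, h3]; push_cast [p1, p2]; ring
  exact_mod_cast this

lemma ballot'_sum (n m : ℕ) (h : m ≤ n+1) :
    ∑ k ∈ range (m+1), ballot' n k = ballot' (n+1) m := by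
  induction m with
  | zero => simp [ballot'_zero]
  | succ m ih =>
    rw [Finset.sum_range_succ, ih (by omega), ballot'_pascal n m (by omega)]

lemma ballot'_diag_eq (m : ℕ) : ballot' (m+1) m = ballot' (m+1) (m+1) := by
  have h1 := ballot'_sum m (m+1) (by omega)
  rw [Finset.sum_range_succ, ballot'_top m, add_zero, ballot'_sum m m (by omega)] at h1
  exact h1

lemma ballot'_diag (n : ℕ) : ballot' n n = (2*n).choose n / (n+1) := by
  have hle := ballot'_choose_le n n (by omega)
  have h1 : (n+n).choose (n+1) * (n+1) = (n+n).choose n * n := by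
    have := Nat.choose_succ_right_eq (n+n) n
    simpa using this
  have key : (2*n).choose n = ballot' n n * (n+1) := by
    have h2n : 2*n = n+n := by omega
    rw [h2n]
    unfold ballot'
    zify [hle]
    push_cast at h1
    linarith
  rw [key, Nat.mul_div_cancel _ (Nat.succ_pos n)]

lemma cMat_rowSum_eq (n : ℕ) (hn : 1 ≤ n) (i : ℕ) (hi : i ≤ n) :
    ∑ j ∈ Icc 1 n, cMat n i j = ballot' (n-1) (n-i) := by
  induction n generalizing i with
  | zero => omega
  | succ n ih =>
    match n, hi with
    | 0, hi =>
      interval_cases i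
      · simpa [cMat] using (ballot'_top 0).symm
      · simp [cMat, ballot'_zero]
    | m+1, hi =>
      have hIcc : (1:ℕ) ≤ m + 1 + 1 := by omega
      rw [Finset.sum_Icc_succ_top hIcc]
      rcases Nat.eq_or_lt_of_le hi with rfl | hlt
      · have h1 : ∀ j ∈ Icc 1 (m+1), cMat (m+2) (m+2) j = 0 := by
          intro j hj
          rw [mem_Icc] at hj
          simp only [cMat]
          rw [if_neg (by omega), if_neg (by omega)]
        rw [Finset.sum_congr rfl h1]
        simp [cMat, ballot'_zero]
      · have hi' : i ≤ m+1 := by omega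
        have hlast : cMat (m+2) i (m+2) = 0 := by
          simp only [cMat]
          rw [if_neg (by omega), if_neg (by omega)]
        rw [hlast, add_zero]
        rcases Nat.eq_zero_or_pos i with rfl | hip
        · have h0 : ∀ j ∈ Icc 1 (m+1), cMat (m+2) 0 j = 0 := by
            intro j hj
            simp only [cMat]
            rw [if_neg (by omega), if_neg (by omega)]
          rw [Finset.sum_congr rfl h0]
          simpa using (ballot'_top (m+1)).symm
        · have h1 : ∀ j ∈ Icc 1 (m+1), cMat (m+2) i j
              = ∑ s ∈ Icc (i-1) (m+1), cMat (m+1) s j := by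
            intro j hj
            rw [mem_Icc] at hj
            simp only [cMat]
            rw [if_pos (by omega)]
          rw [Finset.sum_congr rfl h1, Finset.sum_comm]
          have h2 : ∀ s ∈ Icc (i-1) (m+1),
              (∑ j ∈ Icc 1 (m+1), cMat (m+1) s j) = ballot' m (m+1-s) := by
            intro s hs
            rw [mem_Icc] at hs
            simpa using ih (by omega) s hs.2
          rw [Finset.sum_congr rfl h2, ← Finset.Ico_add_one_right_eq_Icc, Finset.sum_Ico_eq_sum_range]
          have hN : m + 1 + 1 - (i-1) = (m+3-i-1) + 1 := by omega
          have h3 : ∀ k ∈ range (m+3-i), ballot' m (m+1-(i-1+k))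
              = ballot' m ((m+3-i) - 1 - k) := by
            intro k hk
            congr 1
            omega
          rw [hN]
          have h5 : (m+3-i-1)+1 = m+3-i := by omega
          rw [h5, Finset.sum_congr rfl h3, Finset.sum_range_reflect]
          have h4 : m+3-i = (m+2-i)+1 := by omega
          rw [h4, ballot'_sum m (m+2-i) (by omega)]
          congr 1 <;> omega

/-- For every `n ≥ 1`, the sum of all entries of `C_n` equals the
`n`-th Catalan number `(1/(n+1))·binom(2n,n)`. -/
theorem cMat_sum_eq_catalan (n : ℕ) (hn : 1 ≤ n) :
    ∑ i ∈ Finset.Icc 1 n, ∑ j ∈ Finset.Icc 1 n, cMat n i j = (2 * n).choose n / (n + 1) := by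
  obtain ⟨m, rfl⟩ : ∃ m, n = m + 1 := ⟨n - 1, by omega⟩
  have h1 : ∀ i ∈ Icc 1 (m+1), (∑ j ∈ Icc 1 (m+1), cMat (m+1) i j)
      = ballot' m (m+1-i) := by
    intro i hi
    rw [mem_Icc] at hi
    simpa using cMat_rowSum_eq (m+1) (by omega) i hi.2
  rw [Finset.sum_congr rfl h1, ← Finset.Ico_add_one_right_eq_Icc, Finset.sum_Ico_eq_sum_range]
  have h2 : ∀ k ∈ range (m+1+1-1), ballot' m (m+1-(1+k)) = ballot' m ((m+1) - 1 - k) := by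
    intro k hk
    congr 1
    omega
  rw [Finset.sum_congr rfl h2]
  have h6 : m+1+1-1 = m+1 := by omega
  rw [h6, Finset.sum_range_reflect, ballot'_sum m m (by omega), ballot'_diag_eq m,
    ballot'_diag (m+1)]
end

section
/- For every integer n ≥ 2 and every j ∈ {1, …, n−1}, the entry c^{(n)}_{1,j} of the matrix C_n equals the Catalan triangle entry c_{n−2, n−1−j}; explicitly, c^{(n)}_{1,j} = ((2n−3−j)! · j) / ((n−1−j)! · (n−1)!). -/
open Finset

/-- Auxiliary kernel: `D k m i` is the (signed-free, but stated in `ℤ`) number of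
walks of length `k` from `m` down to `i` with steps `≤ +1` and floor `1`;
closed form via a ballot-type binomial difference. -/
def D : ℕ → ℕ → ℕ → ℤ
  | 0, m, i => if i = m then 1 else 0
  | (k+1), m, i =>
      if i ≤ m + k + 1 then
        ((2*k + m + 1 - i).choose k : ℤ) - ((2*k + m + 1 - i).choose (k + 1 + m) : ℤ)
      else 0

lemma D_zero_right (k m : ℕ) (hm : 1 ≤ m) : D k m 0 = 0 := by
  cases k with
  | zero => simp only [D]; rw [if_neg (by omega)]
  | succ k =>
      simp only [D]
      rw [if_pos (by omega : (0:ℕ) ≤ m + k + 1)]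
      have h : 2*k + m + 1 - 0 = 2*k + m + 1 := by omega
      have hsymm : (2*k + m + 1).choose (k + 1 + m) = (2*k + m + 1).choose k := by
        rw [← Nat.choose_symm (by omega : k + 1 + m ≤ 2*k + m + 1)]
        congr 1
        omega
      rw [h, hsymm]
      ring

lemma D_vanish (k m i : ℕ) (h : m + k < i) : D k m i = 0 := by
  cases k with
  | zero => simp only [D]; rw [if_neg (by omega)]
  | succ k => simp only [D]; rw [if_neg (by omega)]

/-- The key recursion: summing the kernel over a suffix interval performs one step of `τ`. -/
lemma sumD (k m i n : ℕ) (hm : 1 ≤ m) (hi : 1 ≤ i) (hn : m + k ≤ n) :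
    ∑ s ∈ Finset.Icc (i-1) n, D k m s = D (k+1) m i := by
  cases k with
  | zero =>
      have hL : ∑ s ∈ Finset.Icc (i-1) n, D 0 m s
          = if m ∈ Finset.Icc (i-1) n then 1 else 0 := by
        simp only [D]
        rw [Finset.sum_ite_eq' (Finset.Icc (i-1) n) m (fun _ => (1:ℤ))]
      rw [hL]
      simp only [D, Finset.mem_Icc]
      have h0 : (2*0 + m + 1 - i).choose (0 + 1 + m) = 0 :=
        Nat.choose_eq_zero_of_lt (by omega)
      by_cases hcase : i ≤ m + 0 + 1
      · rw [if_pos ⟨by omega, by omega⟩, if_pos hcase, h0, Nat.choose_zero_right]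
        ring
      · rw [if_neg (by omega), if_neg hcase]
  | succ K =>
      -- restrict the sum to the support
      have hsub : Finset.Icc (i-1) (m + K + 1) ⊆ Finset.Icc (i-1) n :=
        Finset.Icc_subset_Icc_right (by omega)
      have hzero : ∀ s ∈ Finset.Icc (i-1) n, s ∉ Finset.Icc (i-1) (m + K + 1) →
          D (K+1) m s = 0 := by
        intro s hs hns
        simp only [Finset.mem_Icc] at hs hns
        exact D_vanish _ _ _ (by omega)
      rw [← Finset.sum_subset hsub hzero]
      by_cases hig : i ≤ m + K + 2
      · -- reindex by t = 2K + m + 1 - s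
        have hre : ∑ s ∈ Finset.Icc (i-1) (m + K + 1), D (K+1) m s
            = ∑ t ∈ Finset.Icc K (2*K + m + 2 - i),
                (((t.choose K : ℤ)) - (t.choose (K + 1 + m) : ℤ)) := by
          refine Finset.sum_nbij' (fun s => 2*K + m + 1 - s) (fun t => 2*K + m + 1 - t)
            ?_ ?_ ?_ ?_ ?_
          · intro a ha; simp only [Finset.mem_Icc] at ha ⊢; omega
          · intro a ha; simp only [Finset.mem_Icc] at ha ⊢; omega
          · intro a ha; simp only [Finset.mem_Icc] at ha
            show 2*K + m + 1 - (2*K + m + 1 - a) = a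
            omega
          · intro a ha; simp only [Finset.mem_Icc] at ha
            show 2*K + m + 1 - (2*K + m + 1 - a) = a
            omega
          · intro a ha
            simp only [Finset.mem_Icc] at ha
            simp only [D]
            rw [if_pos (by omega)]
        rw [hre, Finset.sum_sub_distrib]
        -- first sum: hockey stick
        have h1 : ∑ t ∈ Finset.Icc K (2*K + m + 2 - i), (t.choose K : ℤ)
            = ((2*K + m + 3 - i).choose (K+1) : ℤ) := by
          rw [← Nat.cast_sum, Nat.sum_Icc_choose,
            show 2*K + m + 2 - i + 1 = 2*K + m + 3 - i from by omega]
        -- second sum: drop the zero part, then hockey stick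
        have h2 : ∑ t ∈ Finset.Icc K (2*K + m + 2 - i), (t.choose (K + 1 + m) : ℤ)
            = ((2*K + m + 3 - i).choose (K + m + 2) : ℤ) := by
          have hsub2 : Finset.Icc (K + 1 + m) (2*K + m + 2 - i) ⊆
              Finset.Icc K (2*K + m + 2 - i) := Finset.Icc_subset_Icc_left (by omega)
          rw [← Finset.sum_subset hsub2 (by
            intro t ht hnt
            simp only [Finset.mem_Icc] at ht hnt
            have : t < K + 1 + m := by omega
            simp [Nat.choose_eq_zero_of_lt this])]
          rw [← Nat.cast_sum, Nat.sum_Icc_choose,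
            show 2*K + m + 2 - i + 1 = 2*K + m + 3 - i from by omega,
            show K + 1 + m + 1 = K + m + 2 from by omega]
        rw [h1, h2]
        show _ = D (K+1+1) m i
        simp only [D]
        rw [if_pos (by omega)]
        have e1 : 2*(K+1) + m + 1 - i = 2*K + m + 3 - i := by omega
        rw [e1, show K + 1 + 1 + m = K + m + 2 from by omega]
      · -- the interval is empty and the target vanishes
        rw [Finset.Icc_eq_empty (by omega), Finset.sum_empty]
        simp only [D]
        rw [if_neg (by omega)]

lemma cMat_diag_col (n : ℕ) (hn : 1 ≤ n) (s : ℕ) :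
    cMat n s n = if s = n then 1 else 0 := by
  match n, hn with
  | 1, _ => simp [cMat]
  | (t+2), _ =>
      simp only [cMat]
      rw [if_neg (by omega)]
      by_cases h : s = t + 2
      · rw [if_pos ⟨h, trivial⟩]; rw [if_pos h]
      · rw [if_neg (by tauto), if_neg h]

/-- Closed form for all the entries of `C_n` (columns `1 ≤ j ≤ n-1`). -/
lemma cMat_eq_sumD : ∀ n i j : ℕ, 1 ≤ j → j + 1 ≤ n →
    (cMat n i j : ℤ) = ∑ m ∈ Finset.Icc 1 j, D (n - 1 - j) m i := by
  intro n
  induction n with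
  | zero => intro i j h1 h2; omega
  | succ n ih =>
      intro i j hj1 hj2
      obtain ⟨n', rfl⟩ : ∃ n', n = n' + 1 := ⟨n - 1, by omega⟩
      show (cMat (n' + 2) i j : ℤ) = _
      by_cases hdummy : True
      case neg => exact absurd trivial hdummy
      · have hjn : j ≤ n' + 1 := by omega
        simp only [cMat]
        by_cases h1 : 1 ≤ i ∧ i ≤ n' + 1 ∧ 1 ≤ j ∧ j ≤ n' + 1
        · rw [if_pos h1]
          push_cast
          by_cases hjtop : j = n' + 1
          · -- last genuine column: all ones
            subst hjtop
            have hterm : ∀ s ∈ Finset.Icc (i-1) (n'+1),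
                ((cMat (n'+1) s (n'+1) : ℤ)) = if s = n' + 1 then 1 else 0 := by
              intro s _
              rw [cMat_diag_col (n'+1) (by omega) s]
              split_ifs <;> simp
            rw [Finset.sum_congr rfl hterm,
              Finset.sum_ite_eq' (Finset.Icc (i-1) (n'+1)) (n'+1) (fun _ => (1:ℤ))]
            rw [if_pos (by simp only [Finset.mem_Icc]; omega)]
            rw [Nat.sub_self]
            have : ∑ m ∈ Finset.Icc 1 (n'+1), D 0 m i
                = if i ∈ Finset.Icc 1 (n'+1) then 1 else 0 := by
              simp only [D]
              rw [Finset.sum_ite_eq (Finset.Icc 1 (n'+1)) i (fun _ => (1:ℤ))]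
            rw [this, if_pos (by simp only [Finset.mem_Icc]; omega)]
          · -- interior column: use the induction hypothesis and the kernel recursion
            have hjn' : j + 1 ≤ n' + 1 := by omega
            have hterm : ∀ s ∈ Finset.Icc (i-1) (n'+1),
                ((cMat (n'+1) s j : ℤ)) = ∑ m ∈ Finset.Icc 1 j, D (n' - j) m s := by
              intro s _
              have := ih s j hj1 hjn'
              rwa [show n' + 1 - 1 - j = n' - j from by omega] at this
            rw [Finset.sum_congr rfl hterm, Finset.sum_comm]
            have hstep : ∀ m ∈ Finset.Icc 1 j,
                ∑ s ∈ Finset.Icc (i-1) (n'+1), D (n' - j) m s = D (n' - j + 1) m i := by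
              intro m hm
              simp only [Finset.mem_Icc] at hm
              exact sumD (n' - j) m i (n'+1) hm.1 h1.1 (by omega)
            rw [Finset.sum_congr rfl hstep]
            refine Finset.sum_congr rfl (fun m _ => ?_)
            congr 1
            omega
        · rw [if_neg h1, if_neg (by omega)]
          push_cast
          -- i is outside the range 1..n'+1
          have hi0 : i = 0 ∨ n' + 2 ≤ i := by omega
          rcases hi0 with hi0 | hi0
          · subst hi0
            rw [Finset.sum_congr rfl (fun m hm => by
              simp only [Finset.mem_Icc] at hm
              exact D_zero_right _ m hm.1)]
            simp
          · rw [Finset.sum_congr rfl (fun m hm => by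
              simp only [Finset.mem_Icc] at hm
              exact D_vanish _ m i (by omega))]
            simp

/-- Telescoped value of the first-row sum, for `k ≥ 2`. -/
lemma sumD_first_row (K j : ℕ) :
    ∑ m ∈ Finset.Icc 1 j, D (K+2) m 1
      = ((2*K + j + 3).choose (K+2) : ℤ) - ((2*K + j + 3).choose (K+1) : ℤ) := by
  induction j with
  | zero =>
      simp only [Finset.Icc_self, Finset.Icc_eq_empty (by omega : ¬ (1:ℕ) ≤ 0),
        Finset.sum_empty]
      have : (2*K + 0 + 3).choose (K+1) = (2*K + 0 + 3).choose (K+2) := by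
        rw [← Nat.choose_symm (by omega : K + 1 ≤ 2*K + 0 + 3)]
        congr 1
        omega
      rw [this]
      ring
  | succ j ih =>
      rw [show Finset.Icc 1 (j+1) = insert (j+1) (Finset.Icc 1 j) from
        (Finset.insert_Icc_right_eq_Icc_add_one (by omega)).symm, Finset.sum_insert (by
          simp only [Finset.mem_Icc]; omega), ih]
      have hD : D (K+2) (j+1) 1
          = ((2*K + j + 3).choose (K+1) : ℤ) - ((2*K + j + 3).choose K : ℤ) := by
        show D (K+1+1) (j+1) 1 = _
        simp only [D]
        rw [if_pos (by omega)]
        have e1 : 2*(K+1) + (j+1) + 1 - 1 = 2*K + j + 3 := by omega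
        rw [e1]
        have e2 : (2*K + j + 3).choose (K + 1 + 1 + (j+1)) = (2*K + j + 3).choose K := by
          rw [← Nat.choose_symm (by omega : K + 1 + 1 + (j+1) ≤ 2*K + j + 3)]
          congr 1
          omega
        rw [e2]
      rw [hD]
      have p1 : ((2*K + (j+1) + 3).choose (K+2) : ℤ)
          = ((2*K + j + 3).choose (K+1) : ℤ) + ((2*K + j + 3).choose (K+2) : ℤ) := by
        rw [show 2*K + (j+1) + 3 = (2*K + j + 3) + 1 from by omega]
        rw [show (K+2) = (K+1) + 1 from rfl, Nat.choose_succ_succ']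
        push_cast
        ring
      have p2 : ((2*K + (j+1) + 3).choose (K+1) : ℤ)
          = ((2*K + j + 3).choose K : ℤ) + ((2*K + j + 3).choose (K+1) : ℤ) := by
        rw [show 2*K + (j+1) + 3 = (2*K + j + 3) + 1 from by omega]
        rw [show (K+1) = K + 1 from rfl, Nat.choose_succ_succ']
        push_cast
        ring
      rw [p1, p2]
      ring

/-- For `n ≥ 2` and `j ∈ {1, …, n−1}`, the entry `c^{(n)}_{1,j}`
equals the Catalan triangle entry `c_{n−2, n−1−j} = ((2n−3−j)! · j)/((n−1−j)!·(n−1)!)`. -/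
theorem cMat_first_row (n : ℕ) (hn : 2 ≤ n) (j : ℕ) (hj : j ∈ Finset.Icc 1 (n - 1)) :
    cMat n 1 j =
      (2 * n - 3 - j).factorial * j / ((n - 1 - j).factorial * (n - 1).factorial) := by
  simp only [Finset.mem_Icc] at hj
  obtain ⟨j', rfl⟩ : ∃ j', j = j' + 1 := ⟨j - 1, by omega⟩
  obtain ⟨k, rfl⟩ : ∃ k, n = (j' + 1) + k + 1 := ⟨n - j' - 2, by omega⟩
  have hmain := cMat_eq_sumD (j' + 1 + k + 1) 1 (j' + 1) (by omega) (by omega)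
  rw [show j' + 1 + k + 1 - 1 - (j' + 1) = k from by omega] at hmain
  rw [show 2 * (j' + 1 + k + 1) - 3 - (j' + 1) = j' + 2*k from by omega,
    show j' + 1 + k + 1 - 1 - (j' + 1) = k from by omega,
    show j' + 1 + k + 1 - 1 = j' + k + 1 from by omega]
  rcases k with _ | _ | K
  · -- k = 0
    have h1 : (cMat (j' + 1 + 0 + 1) 1 (j' + 1) : ℤ) = 1 := by
      rw [hmain]
      simp only [D]
      rw [Finset.sum_ite_eq (Finset.Icc 1 (j' + 1)) 1 (fun _ => (1:ℤ))]
      rw [if_pos (by simp only [Finset.mem_Icc]; omega)]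
    have hc : cMat (j' + 1 + 0 + 1) 1 (j' + 1) = 1 := by exact_mod_cast h1
    rw [hc, show j' + 2*0 = j' from by omega, show j' + 0 + 1 = j' + 1 from by omega,
      Nat.factorial_zero, one_mul, Nat.factorial_succ,
      mul_comm j'.factorial (j' + 1)]
    exact (Nat.div_self (by positivity)).symm
  · -- k = 1
    have h1 : (cMat (j' + 1 + 1 + 1) 1 (j' + 1) : ℤ) = (j' + 1 : ℕ) := by
      rw [hmain]
      have hterm : ∀ m ∈ Finset.Icc 1 (j' + 1), D 1 m 1 = 1 := by
        intro m hm
        simp only [Finset.mem_Icc] at hm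
        show D (0+1) m 1 = 1
        simp only [D]
        rw [if_pos (by omega)]
        rw [show 2*0 + m + 1 - 1 = m from by omega, Nat.choose_zero_right,
          Nat.choose_eq_zero_of_lt (by omega)]
        norm_num
      rw [Finset.sum_congr rfl hterm, Finset.sum_const, Nat.card_Icc]
      push_cast
      ring
    have hc : cMat (j' + 1 + 1 + 1) 1 (j' + 1) = j' + 1 := by exact_mod_cast h1
    rw [hc, show j' + 2*1 = j' + 2 from by omega, Nat.factorial_one, one_mul,
      show j' + 1 + 1 = j' + 2 from by omega]
    exact (Nat.mul_div_cancel_left (j' + 1) (by positivity)).symm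
  · -- k = K + 2
    have h1 : (cMat (j' + 1 + (K+2) + 1) 1 (j' + 1) : ℤ)
        = ((2*K + (j'+1) + 3).choose (K+2) : ℤ) - ((2*K + (j'+1) + 3).choose (K+1) : ℤ) := by
      rw [hmain, sumD_first_row]
    -- abbreviations
    have hN : 2*K + (j'+1) + 3 = j' + 2*(K+2) := by omega
    rw [hN] at h1
    set N := j' + 2*(K+2) with hNdef
    -- the two factorial identities
    have id1 : (N.choose (K+2)) * ((K+2).factorial * (j' + K + 3).factorial)
        = N.factorial * (j' + K + 3) := by
      have h := Nat.choose_mul_factorial_mul_factorial (show K + 2 ≤ N from by omega)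
      rw [show N - (K+2) = j' + K + 2 from by omega] at h
      have hf : (j' + K + 3).factorial = (j' + K + 3) * (j' + K + 2).factorial := by
        rw [show j' + K + 3 = (j' + K + 2) + 1 from by omega, Nat.factorial_succ]
      rw [hf, ← h]
      ring
    have id2 : (N.choose (K+1)) * ((K+2).factorial * (j' + K + 3).factorial)
        = N.factorial * (K + 2) := by
      have h := Nat.choose_mul_factorial_mul_factorial (show K + 1 ≤ N from by omega)
      rw [show N - (K+1) = j' + K + 3 from by omega] at h
      have hf : (K+2).factorial = (K+2) * (K+1).factorial := Nat.factorial_succ (K+1)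
      rw [hf, ← h]
      ring
    -- conclude via multiplication by the (positive) denominator
    have hd : 0 < (K+2).factorial * (j' + K + 3).factorial := by positivity
    have key : cMat (j' + 1 + (K+2) + 1) 1 (j' + 1)
        * ((K+2).factorial * (j' + K + 3).factorial) = N.factorial * (j' + 1) := by
      have : (cMat (j' + 1 + (K+2) + 1) 1 (j' + 1) : ℤ)
          * (((K+2).factorial * (j' + K + 3).factorial : ℕ) : ℤ)
          = ((N.factorial * (j' + 1) : ℕ) : ℤ) := by
        rw [h1]
        have c1 := congrArg (fun x : ℕ => (x : ℤ)) id1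
        have c2 := congrArg (fun x : ℕ => (x : ℤ)) id2
        push_cast at c1 c2 ⊢
        nlinarith [c1, c2]
      exact_mod_cast this
    rw [show j' + (K+1+1) + 1 = j' + K + 3 from by omega, ← key]
    exact (Nat.mul_div_cancel _ hd).symm
end
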